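/- Let n_v ≥ 1 and n_c ≥ 1 be integers and let the alphabet be the disjoint union A = Fin n_v ⊕ Fin n_c (vowels and consonants). Call a word w : Fin k → A alternating if for every i with i + 1 < k, the letters w(i) and w(i+1) lie in different summands of A. If k ≥ 1 is even, or if k is odd and n_v = n_c, then there exists a universal cycle for the set of alternating k-letter words over A. -/

import Mathlib

/- The finite set of words of length `k` over a finite alphabet `A`
satisfying a predicate `P`. -/
open Classical in
noncomputable def wordsOf {A : Type*} [Fintype A] {k : ℕ} (P : (Fin k → A) → Prop) :
    Finset (Fin k → A) :=
  Finset.univ.filter P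

/-- A nonempty finite set `S` of words of length `k` over `A` admits a universal cycle:
a function `c : ZMod S.card → A` such that `i ↦ (fun j => c (i + j))` is a bijection
from `ZMod S.card` onto `S`. -/
def HasUCycle {A : Type*} {k : ℕ} (S : Finset (Fin k → A)) : Prop :=
  ∃ c : ZMod S.card → A,
    Set.BijOn (fun i : ZMod S.card => fun j : Fin k => c (i + (j.val : ZMod S.card)))
      Set.univ ↑S

set_option linter.unusedSectionVars false
set_option maxHeartbeats 1000000
open Finset

section Euler
variable {E V : Type*} [DecidableEq E] [DecidableEq V] (hd tl : E → V)

/-- counting identity for chains -/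
lemma countP_identity (v : V) :
    ∀ (l : List E) (hne : l ≠ []), l.Chain' (fun a b => tl a = hd b) →
      l.countP (fun e => tl e = v) + (if hd (l.head hne) = v then 1 else 0)
        = l.countP (fun e => hd e = v) + (if tl (l.getLast hne) = v then 1 else 0)
  | [], hne, _ => absurd rfl hne
  | [x], _, _ => by
      simp only [List.countP_cons, List.countP_nil, List.head_cons, List.getLast_singleton,
        decide_eq_true_eq]
      by_cases h1 : hd x = v <;> by_cases h2 : tl x = v <;> simp [h1, h2]
  | x :: y :: ys, hne, hch => by
      have hxy : tl x = hd y := (List.isChain_cons_cons.mp hch).1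
      have ih := countP_identity v (y :: ys) (by simp) (List.isChain_cons_cons.mp hch).2
      simp only [List.countP_cons, List.head_cons, decide_eq_true_eq] at *
      rw [List.getLast_cons (by simp : (y :: ys) ≠ [])]
      rw [hxy]
      by_cases h1 : hd x = v <;> by_cases h2 : hd y = v <;> simp only [h1, h2, if_true, if_false] at ih ⊢ <;> omega

lemma toFinset_filter_card (p : E → Prop) [DecidablePred p] (l : List E) (hl : l.Nodup) :
    (l.toFinset.filter p).card = l.countP (fun e => p e) := by
  induction l with
  | nil => simp
  | cons x xs ih =>
      have hx : x ∉ xs := (List.nodup_cons.mp hl).1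
      have ih' := ih (List.nodup_cons.mp hl).2
      simp only [List.toFinset_cons, List.countP_cons, decide_eq_true_eq]
      by_cases hpx : p x
      · rw [Finset.filter_insert, if_pos hpx, Finset.card_insert_of_notMem (by
          simp only [Finset.mem_filter, List.mem_toFinset]; tauto), ih', if_pos hpx]
      · rw [Finset.filter_insert, if_neg hpx, ih', if_neg hpx]; omega

/-- growing a trail until stuck -/
lemma grow (U : Finset E) :
    ∀ (n : ℕ) (T : List E) (hne : T ≠ []), T.Nodup → (∀ x ∈ T, x ∈ U) →
      T.Chain' (fun a b => tl a = hd b) → U.card - T.length ≤ n →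
      ∃ (T' : List E) (hne' : T' ≠ []), T'.Nodup ∧ (∀ x ∈ T', x ∈ U) ∧
        T'.Chain' (fun a b => tl a = hd b) ∧ T'.head hne' = T.head hne ∧
        (∀ x ∈ U, x ∉ T' → hd x ≠ tl (T'.getLast hne')) := by
  intro n
  induction n with
  | zero =>
      intro T hne hnd hsub hch hcard
      refine ⟨T, hne, hnd, hsub, hch, rfl, ?_⟩
      intro x hxU hxT _
      have h1 : insert x T.toFinset ⊆ U := by
        intro a ha
        rcases Finset.mem_insert.mp ha with rfl | ha
        · exact hxU
        · exact hsub a (List.mem_toFinset.mp ha)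
      have h2 := Finset.card_le_card h1
      rw [Finset.card_insert_of_notMem (by simpa using hxT),
        List.toFinset_card_of_nodup hnd] at h2
      omega
  | succ n ih =>
      intro T hne hnd hsub hch hcard
      by_cases hex : ∃ x ∈ U, x ∉ T ∧ hd x = tl (T.getLast hne)
      · obtain ⟨x, hxU, hxT, hx⟩ := hex
        have hne' : T ++ [x] ≠ [] := by simp
        have hlen : T.length < U.card := by
          have h1 : insert x T.toFinset ⊆ U := by
            intro a ha
            rcases Finset.mem_insert.mp ha with rfl | ha
            · exact hxU
            · exact hsub a (List.mem_toFinset.mp ha)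
          have h2 := Finset.card_le_card h1
          rw [Finset.card_insert_of_notMem (by simpa using hxT),
            List.toFinset_card_of_nodup hnd] at h2
          omega
        obtain ⟨T', hne'', h⟩ := ih (T ++ [x]) hne'
          (hnd.append (List.nodup_singleton x) (by
            intro a ha hax
            rw [List.mem_singleton] at hax
            exact hxT (hax ▸ ha)))
          (by intro a ha
              rcases List.mem_append.mp ha with ha | ha
              · exact hsub a ha
              · rw [List.mem_singleton] at ha; exact ha ▸ hxU)
          (hch.append (List.isChain_singleton x) (by
            intro p hp q hq
            rw [List.getLast?_eq_getLast hne] at hp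
            simp only [List.head?_cons, Option.mem_some_iff] at hp hq
            rw [← hp, ← hq]
            exact hx.symm))
          (by simp; omega)
        refine ⟨T', hne'', h.1, h.2.1, h.2.2.1, ?_, h.2.2.2.2⟩
        rw [h.2.2.2.1]
        exact List.head_append_of_ne_nil hne
      · push_neg at hex
        refine ⟨T, hne, hnd, hsub, hch, rfl, ?_⟩
        intro x hxU hxT
        exact hex x hxU hxT

lemma exists_closed_trail (U : Finset E)
    (bal : ∀ v, (U.filter (fun e => hd e = v)).card = (U.filter (fun e => tl e = v)).card)
    (g : E) (hg : g ∈ U) :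
    ∃ (T : List E) (hne : T ≠ []), T.Nodup ∧ (∀ x ∈ T, x ∈ U) ∧
      T.Chain' (fun a b => tl a = hd b) ∧ T.head hne = g ∧
      tl (T.getLast hne) = hd g := by
  obtain ⟨T, hne, hnd, hsub, hch, hhead, hstuck⟩ :=
    grow hd tl U U.card [g] (by simp) (List.nodup_singleton g)
      (by simpa using hg) (List.isChain_singleton g) (by omega)
  simp only [List.head_cons] at hhead
  refine ⟨T, hne, hnd, hsub, hch, hhead, ?_⟩
  set v := tl (T.getLast hne) with hv
  have hfeq : U.filter (fun e => hd e = v) = T.toFinset.filter (fun e => hd e = v) := by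
    ext a
    simp only [Finset.mem_filter, List.mem_toFinset]
    constructor
    · rintro ⟨haU, hav⟩
      refine ⟨?_, hav⟩
      by_contra haT
      exact hstuck a haU haT hav
    · rintro ⟨haT, hav⟩; exact ⟨hsub a haT, hav⟩
  have hA : T.countP (fun e => hd e = v) = (U.filter (fun e => tl e = v)).card := by
    rw [← bal v, hfeq, toFinset_filter_card _ _ hnd]
  have hB : T.countP (fun e => tl e = v) ≤ (U.filter (fun e => tl e = v)).card := by
    rw [← toFinset_filter_card _ _ hnd]
    exact Finset.card_le_card (Finset.filter_subset_filter _ (by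
      intro a ha; exact hsub a (List.mem_toFinset.mp ha)))
  have hid := countP_identity hd tl v T hne hch
  rw [if_pos rfl] at hid
  by_cases hhv : hd (T.head hne) = v
  · rw [hhead] at hhv; exact hhv.symm
  · rw [if_neg hhv] at hid; omega

lemma circuit_balanced (C : List E) (hne : C ≠ []) (hch : C.Chain' (fun a b => tl a = hd b))
    (hclosed : tl (C.getLast hne) = hd (C.head hne)) (v : V) :
    C.countP (fun e => hd e = v) = C.countP (fun e => tl e = v) := by
  have hid := countP_identity hd tl v C hne hch
  rw [hclosed] at hid
  by_cases h : hd (C.head hne) = v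
  · rw [if_pos h] at hid; omega
  · rw [if_neg h] at hid; omega

lemma escape (C : Finset E) (f : E) (hf : f ∉ C) :
    ∀ x, Relation.ReflTransGen (fun a b => tl a = hd b) x f → x ∈ C →
      ∃ g, g ∉ C ∧ ∃ x' ∈ C, tl x' = hd g := by
  intro x hx
  induction hx using Relation.ReflTransGen.head_induction_on with
  | refl => intro h; exact absurd h hf
  | @head a c hac hcb ih =>
      intro ha
      by_cases hc : c ∈ C
      · exact ih hc
      · exact ⟨c, hc, a, ha, hac⟩

lemma head_append_cons (l1 l2 l2' : List E) (x : E) :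
    (l1 ++ x :: l2).head (by simp) = (l1 ++ x :: l2').head (by simp) := by
  cases l1 <;> simp

lemma euler_main [Fintype E]
    (bal : ∀ v : V, ((Finset.univ : Finset E).filter (fun e => hd e = v)).card
      = (Finset.univ.filter (fun e => tl e = v)).card)
    (conn : ∀ e e' : E, Relation.ReflTransGen (fun a b => tl a = hd b) e e') (e0 : E) :
    ∃ (C : List E) (hne : C ≠ []), C.Nodup ∧ C.length = Fintype.card E ∧
      C.Chain' (fun a b => tl a = hd b) ∧ tl (C.getLast hne) = hd (C.head hne) := by
  suffices h : ∀ n (C : List E) (hne : C ≠ []), C.Nodup →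
      C.Chain' (fun a b => tl a = hd b) → tl (C.getLast hne) = hd (C.head hne) →
      Fintype.card E - C.length ≤ n →
      ∃ (C' : List E) (hne' : C' ≠ []), C'.Nodup ∧ C'.length = Fintype.card E ∧
        C'.Chain' (fun a b => tl a = hd b) ∧ tl (C'.getLast hne') = hd (C'.head hne') by
    obtain ⟨T, hne, hnd, _, hch, hhead, hlast⟩ :=
      exists_closed_trail hd tl Finset.univ bal e0 (mem_univ e0)
    exact h (Fintype.card E) T hne hnd hch (by rw [hhead]; exact hlast) (by omega)
  intro n
  induction n with
  | zero =>
      intro C hne hnd hch hclosed hcard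
      refine ⟨C, hne, hnd, ?_, hch, hclosed⟩
      have h1 : C.toFinset.card ≤ Fintype.card E := by
        simpa using Finset.card_le_card (Finset.subset_univ C.toFinset)
      rw [List.toFinset_card_of_nodup hnd] at h1
      omega
  | succ n ih =>
      intro C hne hnd hch hclosed hcard
      by_cases hful : C.toFinset = Finset.univ
      · refine ⟨C, hne, hnd, ?_, hch, hclosed⟩
        rw [← List.toFinset_card_of_nodup hnd, hful, Finset.card_univ]
      · obtain ⟨f, _, hf⟩ := Finset.exists_of_ssubset
          (Finset.ssubset_univ_iff.mpr hful : C.toFinset ⊂ Finset.univ)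
        obtain ⟨g, hgC, x', hx'C, hx'g⟩ := escape hd tl C.toFinset f hf (C.head hne)
          (conn _ _) (List.mem_toFinset.mpr (List.head_mem hne))
        -- balance of the unused edges
        set U : Finset E := Finset.univ \ C.toFinset with hU
        have hcount : ∀ (p : E → Prop) [DecidablePred p],
            (U.filter p).card = (Finset.univ.filter p).card - (C.toFinset.filter p).card := by
          intro p _
          have hset : U.filter p = Finset.univ.filter p \ C.toFinset.filter p := by
            ext a; simp [hU]; tauto
          rw [hset, Finset.card_sdiff_of_subset (Finset.filter_subset_filter _ (Finset.subset_univ _))]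
        have balU : ∀ v, (U.filter (fun e => hd e = v)).card
            = (U.filter (fun e => tl e = v)).card := by
          intro v
          rw [hcount, hcount, bal v, toFinset_filter_card _ _ hnd,
            toFinset_filter_card _ _ hnd, circuit_balanced hd tl C hne hch hclosed v]
        have hgU : g ∈ U := Finset.mem_sdiff.mpr ⟨Finset.mem_univ g, hgC⟩
        obtain ⟨T, hTne, hTnd, hTsub, hTch, hThead, hTlast⟩ :=
          exists_closed_trail hd tl U balU g hgU
        obtain ⟨C1, C2, hCeq⟩ := List.append_of_mem (List.mem_toFinset.mp hx'C)
        subst hCeq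
        -- the spliced circuit
        have hDne : C1 ++ x' :: (T ++ C2) ≠ [] := by simp
        -- head of D equals head of C
        have hhead : (C1 ++ x' :: (T ++ C2)).head hDne = (C1 ++ x' :: C2).head hne :=
          head_append_cons _ _ _ _
        -- chain conditions from C
        unfold List.Chain' at hch
        rw [List.isChain_append] at hch
        obtain ⟨hch1, hch2, hlink⟩ := hch
        rw [List.isChain_cons] at hch2
        obtain ⟨hlink2, hch3⟩ := hch2
        -- chain of D
        have hchD : (C1 ++ x' :: (T ++ C2)).Chain' (fun a b => tl a = hd b) := by
          refine List.IsChain.append hch1 ?_ ?_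
          · rw [List.isChain_cons]
            constructor
            · intro y hy
              rw [List.head?_append_of_ne_nil _ hTne, List.head?_eq_head hTne,
                Option.mem_some_iff] at hy
              rw [← hy, hThead]
              exact hx'g
            · refine List.IsChain.append hTch hch3 ?_
              intro p hp q hq
              rw [List.getLast?_eq_getLast hTne, Option.mem_some_iff] at hp
              have h2 := hlink2 q hq
              rw [← hp, hTlast, ← hx'g]
              exact h2
          · intro p hp q hq
            simp only [List.head?_cons, Option.mem_some_iff] at hq
            rw [← hq]
            exact hlink p hp x' (by simp)
        -- closedness of D
        have hDlast : ∀ (z : E), (T ++ C2).getLast? = some z →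
            (C1 ++ x' :: (T ++ C2)).getLast hDne = z := by
          intro z hz
          have h1 : (C1 ++ x' :: (T ++ C2)).getLast? = (T ++ C2).getLast? := by
            rw [List.getLast?_append_of_ne_nil _ (by simp : (x' :: (T ++ C2)) ≠ []),
              show (x' :: (T ++ C2)) = [x'] ++ (T ++ C2) by simp,
              List.getLast?_append_of_ne_nil _ (by simp [hTne])]
          rw [List.getLast?_eq_getLast hDne, hz] at h1
          exact Option.some.inj h1
        have hClast : ∀ (z : E), (x' :: C2).getLast? = some z →
            (C1 ++ x' :: C2).getLast hne = z := by
          intro z hz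
          have h1 : (C1 ++ x' :: C2).getLast? = (x' :: C2).getLast? :=
            List.getLast?_append_of_ne_nil _ (by simp)
          rw [List.getLast?_eq_getLast hne, hz] at h1
          exact Option.some.inj h1
        have hopt : ((T ++ C2).getLast? = some (T.getLast hTne) ∧ (x' :: C2).getLast? = some x')
            ∨ (∃ z, (T ++ C2).getLast? = some z ∧ (x' :: C2).getLast? = some z) := by
          cases C2 with
          | nil =>
              left
              constructor
              · rw [List.append_nil]
                exact List.getLast?_eq_getLast hTne
              · rfl
          | cons b C2' =>
              right
              have hbne : (b :: C2') ≠ [] := by simp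
              refine ⟨(b :: C2').getLast hbne, ?_, ?_⟩
              · rw [List.getLast?_append_of_ne_nil _ hbne]
                exact List.getLast?_eq_getLast hbne
              · rw [List.getLast?_cons_cons]
                exact List.getLast?_eq_getLast hbne
        have hclD : tl ((C1 ++ x' :: (T ++ C2)).getLast hDne)
            = hd ((C1 ++ x' :: (T ++ C2)).head hDne) := by
          rw [hhead]
          rcases hopt with ⟨h1, h2⟩ | ⟨z, h1, h2⟩
          · rw [hClast _ h2] at hclosed
            rw [hDlast _ h1, hTlast, ← hx'g]
            exact hclosed
          · rw [hClast _ h2] at hclosed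
            rw [hDlast _ h1]
            exact hclosed
        -- permutation to C ++ T
        have hperm : (C1 ++ x' :: (T ++ C2)).Perm ((C1 ++ x' :: C2) ++ T) := by
          have p1 : (x' :: (T ++ C2)).Perm ((x' :: C2) ++ T) := by
            refine List.Perm.cons x' ?_
            exact List.perm_append_comm
          have p2 := List.Perm.append_left C1 p1
          simpa using p2
        have hdisj : List.Disjoint (C1 ++ x' :: C2) T := by
          intro a haC haT
          exact (Finset.mem_sdiff.mp (hTsub a haT)).2 (List.mem_toFinset.mpr haC)
        have hndD : (C1 ++ x' :: (T ++ C2)).Nodup :=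
          (List.Perm.nodup_iff hperm).mpr (hnd.append hTnd hdisj)
        have hlenD : (C1 ++ x' :: (T ++ C2)).length = (C1 ++ x' :: C2).length + T.length := by
          rw [List.Perm.length_eq hperm, List.length_append]
        have hTpos : 0 < T.length := List.length_pos_iff.mpr hTne
        exact ih (C1 ++ x' :: (T ++ C2)) hDne hndD hchD hclD (by
          have := List.length_pos_iff.mpr hne
          omega)


lemma head_eq_get' (l : List E) (h : l ≠ []) (hp : 0 < l.length) : l.head h = l.get ⟨0, hp⟩ := by
  cases l with
  | nil => exact absurd rfl h
  | cons a l => rfl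

lemma euler_zmod [Fintype E]
    (bal : ∀ v : V, ((Finset.univ : Finset E).filter (fun e => hd e = v)).card
      = (Finset.univ.filter (fun e => tl e = v)).card)
    (conn : ∀ e e' : E, Relation.ReflTransGen (fun a b => tl a = hd b) e e') (e0 : E)
    (m : ℕ) (hm : m = Fintype.card E) :
    ∃ f : ZMod m → E, Function.Bijective f ∧ ∀ i : ZMod m, tl (f i) = hd (f (i + 1)) := by
  obtain ⟨C, hne, hnd, hlen, hch, hclosed⟩ := euler_main hd tl bal conn e0
  have hm' : m = C.length := by rw [hm, hlen]
  have hmpos : 0 < m := by rw [hm']; exact List.length_pos_iff.mpr hne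
  haveI : NeZero m := ⟨by omega⟩
  have hvlt : ∀ i : ZMod m, i.val < C.length := by
    intro i; rw [← hm']; exact ZMod.val_lt i
  refine ⟨fun i => C.get ⟨i.val, hvlt i⟩, ?_, ?_⟩
  · rw [Fintype.bijective_iff_injective_and_card]
    constructor
    · intro i j hij
      have h2 := List.nodup_iff_injective_get.mp hnd hij
      apply ZMod.val_injective
      exact congrArg Fin.val h2
    · rw [ZMod.card, hm]
  · intro i
    show tl (C.get ⟨i.val, hvlt i⟩) = hd (C.get ⟨(i+1).val, hvlt _⟩)
    have hval : (i + 1).val = (i.val + 1) % m := by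
      rw [ZMod.val_add, ZMod.val_one_eq_one_mod]
      conv_rhs => rw [Nat.add_mod]
      rw [Nat.mod_eq_of_lt (ZMod.val_lt i)]
    by_cases hlt : i.val + 1 < m
    · have h1 : (i+1).val = i.val + 1 := by rw [hval, Nat.mod_eq_of_lt hlt]
      have h2 : (⟨(i+1).val, hvlt _⟩ : Fin C.length) = ⟨i.val + 1, by omega⟩ := Fin.ext h1
      rw [h2]
      simpa using List.isChain_iff_getElem.mp hch i.val (by omega)
    · have hiv : i.val = m - 1 := by have := ZMod.val_lt i; omega
      have h1 : (i+1).val = 0 := by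
        rw [hval, hiv, show m - 1 + 1 = m by omega, Nat.mod_self]
      have h2 : C.get ⟨i.val, hvlt i⟩ = C.getLast hne := by
        rw [List.getLast_eq_getElem]
        congr 1
        exact Fin.ext (by simp [hiv, hm'])
      have h3 : C.get ⟨(i+1).val, hvlt _⟩ = C.head hne := by
        rw [head_eq_get' _ _ (by omega)]
        congr 1
        exact Fin.ext h1
      rw [h2, h3]
      exact hclosed


end Euler

def altP (nv nc k : ℕ) (w : Fin k → (Fin nv ⊕ Fin nc)) : Prop :=
  ∀ i : ℕ, ∀ h' : i + 1 < k,
    (w ⟨i + 1, h'⟩).isLeft ≠ (w ⟨i, by omega⟩).isLeft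

abbrev AltWord (nv nc k : ℕ) := {w : Fin k → (Fin nv ⊕ Fin nc) // altP nv nc k w}

lemma mem_wordsOf_iff {nv nc k : ℕ} (x : Fin k → (Fin nv ⊕ Fin nc)) :
    x ∈ wordsOf (altP nv nc k) ↔ altP nv nc k x := by
  classical
  unfold wordsOf
  rw [Finset.mem_filter]
  exact ⟨fun h => h.2, fun h => ⟨Finset.mem_univ x, h⟩⟩

noncomputable instance instFintypeAltWord (nv nc k : ℕ) : Fintype (AltWord nv nc k) :=
  Fintype.subtype (wordsOf (altP nv nc k)) mem_wordsOf_iff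

lemma card_AltWord (nv nc k : ℕ) :
    Fintype.card (AltWord nv nc k) = (wordsOf (altP nv nc k)).card :=
  Fintype.subtype_card _ mem_wordsOf_iff

def hdW {nv nc k' : ℕ} (e : AltWord nv nc (k'+1)) : Fin k' → (Fin nv ⊕ Fin nc) :=
  fun j => e.val ⟨j.val, by omega⟩

def tlW {nv nc k' : ℕ} (e : AltWord nv nc (k'+1)) : Fin k' → (Fin nv ⊕ Fin nc) :=
  fun j => e.val ⟨j.val + 1, by omega⟩

lemma alt_flip {nv nc k : ℕ} {w : Fin k → (Fin nv ⊕ Fin nc)} (hw : altP nv nc k w)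
    (i : ℕ) (hi : i + 1 < k) :
    (w ⟨i + 1, hi⟩).isLeft = !(w ⟨i, by omega⟩).isLeft := by
  have h1 := hw i hi
  revert h1
  cases (w ⟨i + 1, hi⟩).isLeft <;> cases (w ⟨i, by omega⟩).isLeft <;> simp

lemma alt_parity {nv nc k : ℕ} {w : Fin k → (Fin nv ⊕ Fin nc)} (hw : altP nv nc k w)
    (hk : 0 < k) (i : ℕ) (hi : i < k) :
    (w ⟨i, hi⟩).isLeft = xor (decide (i % 2 = 1)) ((w ⟨0, hk⟩).isLeft) := by
  induction i with
  | zero => simp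
  | succ n ih =>
      have h2 := ih (by omega)
      rw [alt_flip hw n hi, h2]
      by_cases hp : n % 2 = 1
      · simp [hp, show ¬((n+1) % 2 = 1) by omega]
      · simp [hp, show (n+1) % 2 = 1 by omega]

lemma parity_flip (k' : ℕ) : (decide ((k'+1) % 2 = 1)) = !(decide (k' % 2 = 1)) := by
  by_cases h : k' % 2 = 1
  · simp [h, show (k'+1) % 2 = 0 by omega]
  · simp [h, show (k'+1) % 2 = 1 by omega]

lemma parity_xor (a b : ℕ) (h : b ≤ a) :
    xor (decide ((a - b) % 2 = 1)) (decide (b % 2 = 1)) = decide (a % 2 = 1) := by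
  by_cases h1 : (a - b) % 2 = 1 <;> by_cases h2 : b % 2 = 1 <;>
    simp [h1, h2] <;> omega

variable {nv nc k' : ℕ}

lemma sigma_symm_isLeft (σ : (Fin nv ⊕ Fin nc) ≃ (Fin nv ⊕ Fin nc))
    (hσ : ∀ a, (σ a).isLeft = xor (decide ((k'+1) % 2 = 1)) a.isLeft)
    (b : Fin nv ⊕ Fin nc) :
    (σ.symm b).isLeft = xor (decide ((k'+1) % 2 = 1)) b.isLeft := by
  have h := hσ (σ.symm b)
  rw [Equiv.apply_symm_apply] at h
  rw [h]
  cases decide ((k'+1) % 2 = 1) <;> cases (σ.symm b).isLeft <;> simp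

lemma sigma_boundary (σ : (Fin nv ⊕ Fin nc) ≃ (Fin nv ⊕ Fin nc))
    (hσ : ∀ a, (σ a).isLeft = xor (decide ((k'+1) % 2 = 1)) a.isLeft)
    (e : AltWord nv nc (k'+1)) :
    (σ (e.val ⟨k', by omega⟩)).isLeft ≠ (e.val ⟨0, by omega⟩).isLeft := by
  rw [hσ, alt_parity e.prop (by omega) k' (by omega), parity_flip]
  cases decide (k' % 2 = 1) <;> cases (e.val ⟨0, by omega⟩).isLeft <;> simp

lemma sigma_symm_boundary (σ : (Fin nv ⊕ Fin nc) ≃ (Fin nv ⊕ Fin nc))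
    (hσ : ∀ a, (σ a).isLeft = xor (decide ((k'+1) % 2 = 1)) a.isLeft)
    (e : AltWord nv nc (k'+1)) :
    (σ.symm (e.val ⟨0, by omega⟩)).isLeft ≠ (e.val ⟨k', by omega⟩).isLeft := by
  rw [sigma_symm_isLeft σ hσ, alt_parity e.prop (by omega) k' (by omega), parity_flip]
  cases decide (k' % 2 = 1) <;> cases (e.val ⟨0, by omega⟩).isLeft <;> simp


lemma finmk_eq {n a b : ℕ} (ha : a < n) (hb : b < n) (h : a = b) :
    (⟨a, ha⟩ : Fin n) = ⟨b, hb⟩ := by subst h; rfl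

lemma fin_eq_mk {n b : ℕ} (i : Fin n) (hb : b < n) (h : i.val = b) : i = ⟨b, hb⟩ :=
  Fin.ext h

section Balance
variable {nv nc k' : ℕ}

def phiW (σ : (Fin nv ⊕ Fin nc) ≃ (Fin nv ⊕ Fin nc)) (v : Fin k' → (Fin nv ⊕ Fin nc))
    (e : AltWord nv nc (k'+1)) : Fin (k'+1) → (Fin nv ⊕ Fin nc) :=
  fun i => if h : i.val = 0 then σ (e.val ⟨k', by omega⟩)
    else v ⟨i.val - 1, by have := i.isLt; omega⟩

def psiW (σ : (Fin nv ⊕ Fin nc) ≃ (Fin nv ⊕ Fin nc)) (v : Fin k' → (Fin nv ⊕ Fin nc))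
    (e : AltWord nv nc (k'+1)) : Fin (k'+1) → (Fin nv ⊕ Fin nc) :=
  fun i => if h : i.val < k' then v ⟨i.val, h⟩ else σ.symm (e.val ⟨0, by omega⟩)

variable (σ : (Fin nv ⊕ Fin nc) ≃ (Fin nv ⊕ Fin nc)) (v : Fin k' → (Fin nv ⊕ Fin nc))
  (e : AltWord nv nc (k'+1))

lemma phiW_zero (hj : 0 < k'+1) :
    phiW σ v e ⟨0, hj⟩ = σ (e.val ⟨k', by omega⟩) := dif_pos rfl

lemma phiW_succ (j : ℕ) (hj : j + 1 < k'+1) :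
    phiW σ v e ⟨j+1, hj⟩ = v ⟨j, by omega⟩ := by
  rw [phiW, dif_neg (show ¬((j:ℕ)+1 = 0) by omega)]
  congr 1

lemma psiW_lt (j : ℕ) (hj : j < k') (hj2 : j < k'+1) :
    psiW σ v e ⟨j, hj2⟩ = v ⟨j, hj⟩ := dif_pos hj

lemma psiW_last (hj : k' < k'+1) :
    psiW σ v e ⟨k', hj⟩ = σ.symm (e.val ⟨0, by omega⟩) := dif_neg (lt_irrefl k')

lemma phiW_alt (hσ : ∀ a, (σ a).isLeft = xor (decide ((k'+1) % 2 = 1)) a.isLeft)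
    (he : hdW e = v) : altP nv nc (k'+1) (phiW σ v e) := by
  have hv : ∀ (j : ℕ) (hj : j < k'), v ⟨j, hj⟩ = e.val ⟨j, by omega⟩ :=
    fun j hj => (congrFun he ⟨j, hj⟩).symm
  intro i h'
  rcases Nat.eq_zero_or_pos i with h0 | h0
  · subst h0
    rw [phiW_succ σ v e 0 h', phiW_zero σ v e (by omega), hv 0 (by omega)]
    exact fun hh => (sigma_boundary σ hσ e) hh.symm
  · obtain ⟨m, rfl⟩ : ∃ m, i = m + 1 := ⟨i - 1, by omega⟩
    rw [phiW_succ σ v e (m+1) h', phiW_succ σ v e m (by omega),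
      hv (m+1) (by omega), hv m (by omega)]
    exact e.prop m (by omega)

lemma psiW_alt (hσ : ∀ a, (σ a).isLeft = xor (decide ((k'+1) % 2 = 1)) a.isLeft)
    (he : tlW e = v) : altP nv nc (k'+1) (psiW σ v e) := by
  have hv : ∀ (j : ℕ) (hj : j < k'), v ⟨j, hj⟩ = e.val ⟨j + 1, by omega⟩ :=
    fun j hj => (congrFun he ⟨j, hj⟩).symm
  intro i h'
  by_cases hik : i + 1 < k'
  · rw [psiW_lt σ v e (i+1) hik (by omega), psiW_lt σ v e i (by omega) (by omega),
      hv (i+1) hik, hv i (by omega)]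
    exact e.prop (i+1) (by omega)
  · have hik' : i + 1 = k' := by omega
    have h1 : (⟨i+1, h'⟩ : Fin (k'+1)) = ⟨k', by omega⟩ := finmk_eq _ _ (by omega)
    have h5 : v ⟨i, by omega⟩ = e.val ⟨k', by omega⟩ := by
      rw [hv i (by omega)]
      exact congrArg e.val (finmk_eq _ _ (by omega))
    rw [h1, psiW_last σ v e (by omega), psiW_lt σ v e i (by omega) (by omega), h5]
    exact sigma_symm_boundary σ hσ e

lemma balanceW (hσ : ∀ a, (σ a).isLeft = xor (decide ((k'+1) % 2 = 1)) a.isLeft) :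
    ((Finset.univ : Finset (AltWord nv nc (k'+1))).filter (fun e => hdW e = v)).card
      = (Finset.univ.filter (fun e => tlW e = v)).card := by
  have hmem1 : ∀ e : AltWord nv nc (k'+1),
      e ∈ Finset.univ.filter (fun e => hdW e = v) ↔ hdW e = v := by
    intro e; simp
  have hmem2 : ∀ e : AltWord nv nc (k'+1),
      e ∈ Finset.univ.filter (fun e => tlW e = v) ↔ tlW e = v := by
    intro e; simp
  refine Finset.card_bij'
    (fun e he => ⟨phiW σ v e, phiW_alt σ v e hσ ((hmem1 e).mp he)⟩)
    (fun e he => ⟨psiW σ v e, psiW_alt σ v e hσ ((hmem2 e).mp he)⟩) ?_ ?_ ?_ ?_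
  · -- phi lands in t : tlW (phi e) = v
    intro e he
    rw [hmem2]
    funext j
    show phiW σ v e ⟨j.val + 1, by omega⟩ = v j
    rw [phiW_succ σ v e j.val (by omega)]
  · -- psi lands in s : hdW (psi e) = v
    intro e he
    rw [hmem1]
    funext j
    show psiW σ v e ⟨j.val, by omega⟩ = v j
    rw [psiW_lt σ v e j.val j.isLt (by omega)]
  · -- left inverse
    intro e he
    have hv : ∀ (j : ℕ) (hj : j < k'), v ⟨j, hj⟩ = e.val ⟨j, by omega⟩ :=
      fun j hj => (congrFun ((hmem1 e).mp he) ⟨j, hj⟩).symm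
    apply Subtype.ext
    funext i
    show psiW σ v ⟨phiW σ v e, _⟩ i = e.val i
    by_cases h : i.val < k'
    · have h1 : i = ⟨i.val, by omega⟩ := fin_eq_mk i (by omega) rfl
      rw [h1, psiW_lt σ v _ i.val h (by omega), hv i.val h]
    · have hik : i = ⟨k', by omega⟩ := fin_eq_mk i (by omega) (by have := i.isLt; omega)
      rw [hik, psiW_last σ v _ (by omega)]
      show σ.symm (phiW σ v e ⟨0, by omega⟩) = _
      rw [phiW_zero σ v e (by omega), Equiv.symm_apply_apply]
  · -- right inverse
    intro e he
    have hv : ∀ (j : ℕ) (hj : j < k'), v ⟨j, hj⟩ = e.val ⟨j + 1, by omega⟩ :=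
      fun j hj => (congrFun ((hmem2 e).mp he) ⟨j, hj⟩).symm
    apply Subtype.ext
    funext i
    show phiW σ v ⟨psiW σ v e, _⟩ i = e.val i
    by_cases h : i.val = 0
    · have h1 : i = ⟨0, by omega⟩ := Fin.ext h
      rw [h1, phiW_zero σ v _ (by omega)]
      show σ (psiW σ v e ⟨k', by omega⟩) = _
      rw [psiW_last σ v e (by omega), Equiv.apply_symm_apply]
    · obtain ⟨m, hm⟩ : ∃ m, i.val = m + 1 := ⟨i.val - 1, by omega⟩
      have h1 : i = ⟨m + 1, by have := i.isLt; omega⟩ := fin_eq_mk i (by have := i.isLt; omega) hm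
      rw [h1, phiW_succ σ v _ m (by have := i.isLt; omega), hv m (by have := i.isLt; omega)]

end Balance

lemma connW {nv nc k' : ℕ} (hv : 1 ≤ nv) (hc : 1 ≤ nc) (e e' : AltWord nv nc (k'+1)) :
    Relation.ReflTransGen (fun a b => tlW a = hdW b) e e' := by
  classical
  have hk0 : 0 < k' + 1 := by omega
  set x : Bool := (e.val ⟨0, hk0⟩).isLeft with hx
  set x' : Bool := (e'.val ⟨0, hk0⟩).isLeft with hx'
  set d : ℕ := if x' = xor (decide ((k'+1) % 2 = 1)) x then 0 else 1 with hd
  set t : ℕ := (k'+1) + d with ht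
  have htk : k' + 1 ≤ t := by omega
  have hpar : x' = xor (decide (t % 2 = 1)) x := by
    by_cases hcond : x' = xor (decide ((k'+1) % 2 = 1)) x
    · have hd0 : d = 0 := if_pos hcond
      rw [ht, hd0, Nat.add_zero]
      exact hcond
    · have hd1 : d = 1 := if_neg hcond
      have ht1 : t = (k'+1) + 1 := by rw [ht, hd1]
      rw [ht1, parity_flip (k'+1)]
      revert hcond
      cases hb : decide ((k'+1) % 2 = 1) <;> cases x' <;> cases x <;> simp
  set u : ℕ → (Fin nv ⊕ Fin nc) := fun n =>
    if h1 : n < k'+1 then e.val ⟨n, h1⟩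
    else if h2 : t ≤ n ∧ n - t < k'+1 then e'.val ⟨n - t, h2.2⟩
    else (if xor (decide (n % 2 = 1)) x = true then Sum.inl ⟨0, hv⟩ else Sum.inr ⟨0, hc⟩)
    with hu
  have hul : ∀ n, (u n).isLeft = xor (decide (n % 2 = 1)) x := by
    intro n
    simp only [hu]
    by_cases h1 : n < k'+1
    · rw [dif_pos h1]
      exact alt_parity e.prop hk0 n h1
    · rw [dif_neg h1]
      by_cases h2 : t ≤ n ∧ n - t < k'+1
      · rw [dif_pos h2]
        rw [alt_parity e'.prop hk0 (n - t) h2.2]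
        show xor _ x' = _
        rw [hpar, ← Bool.xor_assoc, parity_xor n t h2.1]
      · rw [dif_neg h2]
        by_cases h3 : xor (decide (n % 2 = 1)) x = true
        · rw [if_pos h3, h3]
          rfl
        · rw [if_neg h3]
          have h4 : xor (decide (n % 2 = 1)) x = false := by
            revert h3; cases decide (n % 2 = 1) <;> cases x <;> simp
          rw [h4]
          rfl
  have hualt : ∀ n, (u (n+1)).isLeft ≠ (u n).isLeft := by
    intro n
    rw [hul, hul, parity_flip n]
    cases decide (n % 2 = 1) <;> cases x <;> simp
  have hwalt : ∀ s : ℕ, altP nv nc (k'+1) (fun j : Fin (k'+1) => u (s + j.val)) := by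
    intro s i hi
    exact hualt (s + i)
  set w : ℕ → AltWord nv nc (k'+1) := fun s => ⟨fun j => u (s + j.val), hwalt s⟩ with hw
  have hstep : ∀ s, tlW (w s) = hdW (w (s+1)) := by
    intro s
    funext j
    show u (s + (j.val + 1)) = u ((s+1) + j.val)
    congr 1
    omega
  have hchain : ∀ s, Relation.ReflTransGen (fun a b => tlW a = hdW b) (w 0) (w s) := by
    intro s
    induction s with
    | zero => exact Relation.ReflTransGen.refl
    | succ n ih => exact ih.tail (hstep n)
  have hw0 : w 0 = e := by
    apply Subtype.ext
    funext j
    show u (0 + j.val) = e.val j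
    have hj : 0 + j.val < k'+1 := by have := j.isLt; omega
    simp only [hu]
    rw [dif_pos hj]
    exact congrArg e.val (fin_eq_mk j hj (by omega)).symm
  have hwt : w t = e' := by
    apply Subtype.ext
    funext j
    show u (t + j.val) = e'.val j
    have hj1 : ¬(t + j.val < k'+1) := by omega
    have hj2 : t ≤ t + j.val ∧ (t + j.val) - t < k'+1 := ⟨by omega, by have := j.isLt; omega⟩
    simp only [hu]
    rw [dif_neg hj1, dif_pos hj2]
    exact congrArg e'.val (fin_eq_mk j hj2.2 (by omega)).symm
  rw [← hw0, ← hwt]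
  exact hchain t

def someW (nv nc k : ℕ) (hv : 1 ≤ nv) (hc : 1 ≤ nc) : AltWord nv nc k :=
  ⟨fun j => if j.val % 2 = 0 then Sum.inl ⟨0, hv⟩ else Sum.inr ⟨0, hc⟩, by
    intro i hi
    show (if (i+1) % 2 = 0 then (Sum.inl ⟨0, hv⟩ : Fin nv ⊕ Fin nc) else Sum.inr ⟨0, hc⟩).isLeft
      ≠ (if i % 2 = 0 then (Sum.inl ⟨0, hv⟩ : Fin nv ⊕ Fin nc) else Sum.inr ⟨0, hc⟩).isLeft
    by_cases hp : i % 2 = 0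
    · rw [if_pos hp, if_neg (by omega)]
      simp
    · rw [if_neg hp, if_pos (by omega)]
      simp⟩

section Assembly

lemma aux_ucycle (nv nc k' : ℕ) (hv : 1 ≤ nv) (hc : 1 ≤ nc)
    (σ : (Fin nv ⊕ Fin nc) ≃ (Fin nv ⊕ Fin nc))
    (hσ : ∀ a, (σ a).isLeft = xor (decide ((k'+1) % 2 = 1)) a.isLeft) :
    HasUCycle (wordsOf (altP nv nc (k'+1))) := by
  classical
  obtain ⟨f, hfbij, hfcyc⟩ := euler_zmod (E := AltWord nv nc (k'+1))
    (V := Fin k' → (Fin nv ⊕ Fin nc)) hdW tlW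
    (fun v => balanceW σ v hσ) (connW hv hc) (someW nv nc (k'+1) hv hc)
    (wordsOf (altP nv nc (k'+1))).card (card_AltWord nv nc (k'+1)).symm
  set c : ZMod (wordsOf (altP nv nc (k'+1))).card → (Fin nv ⊕ Fin nc) := fun i => (f i).val ⟨0, by omega⟩ with hcdef
  have hwin : ∀ (j : ℕ) (hj : j < k'+1) (i : ZMod (wordsOf (altP nv nc (k'+1))).card),
      (f i).val ⟨j, hj⟩ = c (i + (j : ZMod (wordsOf (altP nv nc (k'+1))).card)) := by
    intro j
    induction j with
    | zero =>
        intro hj i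
        rw [Nat.cast_zero, add_zero]
    | succ n ih =>
        intro hj i
        have h1 := congrFun (hfcyc i) (⟨n, by omega⟩ : Fin k')
        have h2 : (f i).val ⟨n+1, hj⟩ = tlW (f i) ⟨n, by omega⟩ := rfl
        have h3 : hdW (f (i+1)) (⟨n, by omega⟩ : Fin k') = (f (i+1)).val ⟨n, by omega⟩ := rfl
        rw [h2, h1, h3, ih (by omega) (i+1)]
        congr 1
        push_cast
        ring
  have hkey : ∀ i : ZMod (wordsOf (altP nv nc (k'+1))).card,
      (fun j : Fin (k'+1) => c (i + ((j.val : ℕ) : ZMod (wordsOf (altP nv nc (k'+1))).card))) = (f i).val := by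
    intro i
    funext j
    rw [← hwin j.val j.isLt i]
  refine ⟨c, ?_, ?_, ?_⟩
  · intro i _
    show (fun j : Fin (k'+1) => c (i + ((j.val : ℕ) : ZMod (wordsOf (altP nv nc (k'+1))).card))) ∈ _
    rw [hkey i]
    exact Finset.mem_coe.mpr ((mem_wordsOf_iff _).mpr (f i).2)
  · intro i _ j _ hij
    have h1 : (fun j' : Fin (k'+1) => c (i + ((j'.val : ℕ) : ZMod (wordsOf (altP nv nc (k'+1))).card)))
        = (fun j' : Fin (k'+1) => c (j + ((j'.val : ℕ) : ZMod (wordsOf (altP nv nc (k'+1))).card))) := hij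
    rw [hkey i, hkey j] at h1
    exact hfbij.1 (Subtype.ext h1)
  · intro ww hww
    obtain ⟨i, hi⟩ := hfbij.2 ⟨ww, (mem_wordsOf_iff ww).mp (Finset.mem_coe.mp hww)⟩
    refine ⟨i, Set.mem_univ i, ?_⟩
    show (fun j : Fin (k'+1) => c (i + ((j.val : ℕ) : ZMod (wordsOf (altP nv nc (k'+1))).card))) = ww
    rw [hkey i, hi]

end Assembly

/-- Over an alphabet of `n_v ≥ 1` vowels and `n_c ≥ 1` consonants (encoded as
`Fin n_v ⊕ Fin n_c`), U-cycles of alternating `k`-letter words (consecutive letters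
from opposite classes) exist if `k ≥ 1` is even, or if `k` is odd and `n_v = n_c`. -/
theorem ucycle_alternating_words (nv nc k : ℕ) (hv : 1 ≤ nv) (hc : 1 ≤ nc) (hk : 1 ≤ k)
    (h : Even k ∨ (Odd k ∧ nv = nc)) :
    HasUCycle (wordsOf (fun w : Fin k → (Fin nv ⊕ Fin nc) =>
      ∀ i : ℕ, ∀ h' : i + 1 < k,
        (w ⟨i + 1, h'⟩).isLeft ≠ (w ⟨i, by omega⟩).isLeft)) := by
  obtain ⟨k', rfl⟩ : ∃ k', k = k' + 1 := ⟨k - 1, by omega⟩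
  show HasUCycle (wordsOf (altP nv nc (k'+1)))
  rcases h with hEven | ⟨hOdd, hEq⟩
  · refine aux_ucycle nv nc k' hv hc (Equiv.refl _) ?_
    intro a
    have h2 : (k'+1) % 2 = 0 := Nat.even_iff.mp hEven
    simp [h2]
  · subst hEq
    refine aux_ucycle nv nv k' hv hv (Equiv.sumComm _ _) ?_
    intro a
    have h2 : (k'+1) % 2 = 1 := Nat.odd_iff.mp hOdd
    cases a <;> simp [h2]
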